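/- Let E be a real normed vector space and S ⊆ E. Let λ > 0 and α > μ > 0. Let M : E → (n×n real symmetric matrices) be Lipschitz on S with constant L_M, let C ∈ ℝ^{p×n} and D ∈ ℝ^{p×m} be fixed matrices with ‖C‖ ≤ S_C, ‖D‖ ≤ S_D (spectral norm), and let K : E → ℝ^{m×n} be Lipschitz on S with constant L_K and ‖K(s)‖ ≤ S_K on S. Define G(s) := [[λ·M(s) − α⁻¹·(C + D·K(s))ᵀ(C + D·K(s)), 0],[0, (α−μ)·I_l]] (a symmetric block-diagonal matrix). Then the function s ↦ λ_max(G(s)) is Lipschitz on S with constant λ·L_M + (2/α)·S_C S_D L_K + (4/α)·S_K S_D² L_K. -/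

import Mathlib

open Matrix Set

noncomputable def euclNorm {ι : Type*} [Fintype ι] (v : ι → ℝ) : ℝ := Real.sqrt (v ⬝ᵥ v)

/-- Spectral (ℓ²-operator) norm of a real matrix. -/
noncomputable def specNorm {ι κ : Type*} [Fintype ι] [Fintype κ] [DecidableEq κ]
    (A : Matrix ι κ ℝ) : ℝ :=
  ‖LinearMap.toContinuousLinearMap (Matrix.toEuclideanLin A)‖

/-- Largest eigenvalue of a real symmetric matrix, as the supremum of the
Rayleigh quotient over the unit sphere. -/
noncomputable def lambdaMax {ι : Type*} [Fintype ι] (A : Matrix ι ι ℝ) : ℝ :=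
  sSup {r : ℝ | ∃ v : ι → ℝ, euclNorm v = 1 ∧ r = v ⬝ᵥ (A *ᵥ v)}

section Helpers
variable {ι κ : Type*} [Fintype ι] [Fintype κ]

noncomputable def toEuc (v : ι → ℝ) : EuclideanSpace ℝ ι := (WithLp.equiv 2 (ι → ℝ)).symm v

lemma dotProduct_self_nonneg' (v : ι → ℝ) : 0 ≤ v ⬝ᵥ v :=
  Finset.sum_nonneg fun i _ => mul_self_nonneg _

lemma euclNorm_eq (v : ι → ℝ) : euclNorm v = ‖toEuc v‖ := by
  rw [euclNorm, EuclideanSpace.norm_eq]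
  congr 1
  simp [dotProduct, toEuc, Real.norm_eq_abs, sq_abs, sq]

lemma euclNorm_nonneg (v : ι → ℝ) : 0 ≤ euclNorm v := Real.sqrt_nonneg _

lemma euclNorm_sq (v : ι → ℝ) : euclNorm v ^ 2 = v ⬝ᵥ v :=
  Real.sq_sqrt (dotProduct_self_nonneg' v)

lemma abs_euclNorm_sub_le (x y : ι → ℝ) :
    |euclNorm x - euclNorm y| ≤ euclNorm (x - y) := by
  rw [euclNorm_eq, euclNorm_eq, euclNorm_eq]
  have : toEuc (x - y) = toEuc x - toEuc y := rfl
  rw [this]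
  exact abs_norm_sub_norm_le _ _

variable [DecidableEq κ]

lemma specNorm_nonneg (A : Matrix ι κ ℝ) : 0 ≤ specNorm A := norm_nonneg _

lemma euclNorm_mulVec_le (A : Matrix ι κ ℝ) (v : κ → ℝ) :
    euclNorm (A *ᵥ v) ≤ specNorm A * euclNorm v := by
  rw [euclNorm_eq, euclNorm_eq]
  have h : toEuc (A *ᵥ v) = LinearMap.toContinuousLinearMap (Matrix.toEuclideanLin A) (toEuc v) := by
    simp [toEuc, Matrix.toEuclideanLin_apply_piLp_toLp]
  rw [h]
  exact (LinearMap.toContinuousLinearMap _).le_opNorm _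

lemma specNorm_add_le (A B : Matrix ι κ ℝ) : specNorm (A + B) ≤ specNorm A + specNorm B := by
  unfold specNorm
  rw [map_add, map_add]
  exact norm_add_le _ _

lemma specNorm_mul_le {τ : Type*} [Fintype τ] [DecidableEq τ] (A : Matrix ι κ ℝ)
    (B : Matrix κ τ ℝ) : specNorm (A * B) ≤ specNorm A * specNorm B := by
  have h : LinearMap.toContinuousLinearMap (Matrix.toEuclideanLin (A * B)) =
      (LinearMap.toContinuousLinearMap (Matrix.toEuclideanLin A)).comp
        (LinearMap.toContinuousLinearMap (Matrix.toEuclideanLin B)) := by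
    ext x
    simp [Matrix.toEuclideanLin_apply, Matrix.mulVec_mulVec]
  rw [specNorm, h]
  exact ContinuousLinearMap.opNorm_comp_le _ _

lemma abs_rayleigh_le (A : Matrix ι ι ℝ) [DecidableEq ι] (v : ι → ℝ) :
    |v ⬝ᵥ (A *ᵥ v)| ≤ specNorm A * euclNorm v ^ 2 := by
  have h1 : v ⬝ᵥ (A *ᵥ v) = inner ℝ (toEuc v) (toEuc (A *ᵥ v)) := by
    simp [toEuc, dotProduct, PiLp.inner_apply, RCLike.inner_apply, mul_comm]
  rw [h1]
  calc |(inner ℝ (toEuc v) (toEuc (A *ᵥ v)) : ℝ)| ≤ ‖toEuc v‖ * ‖toEuc (A *ᵥ v)‖ :=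
        abs_real_inner_le_norm _ _
    _ ≤ ‖toEuc v‖ * (specNorm A * euclNorm v) := by
        refine mul_le_mul_of_nonneg_left ?_ (norm_nonneg _)
        rw [← euclNorm_eq]; exact euclNorm_mulVec_le A v
    _ = specNorm A * euclNorm v ^ 2 := by rw [euclNorm_eq]; ring

end Helpers

section LMax
variable {ι : Type*} [Fintype ι] [DecidableEq ι]

lemma bddAbove_ray (A : Matrix ι ι ℝ) :
    BddAbove {r : ℝ | ∃ v : ι → ℝ, euclNorm v = 1 ∧ r = v ⬝ᵥ (A *ᵥ v)} := by
  refine ⟨specNorm A, ?_⟩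
  rintro r ⟨v, hv, rfl⟩
  have h := abs_rayleigh_le A v
  rw [hv] at h
  simpa using (le_abs_self _).trans h

lemma ray_nonempty [Nonempty ι] (A : Matrix ι ι ℝ) :
    Set.Nonempty {r : ℝ | ∃ v : ι → ℝ, euclNorm v = 1 ∧ r = v ⬝ᵥ (A *ᵥ v)} := by
  obtain ⟨i⟩ := ‹Nonempty ι›
  refine ⟨_, Pi.single i 1, ?_, rfl⟩
  have : (Pi.single i 1 : ι → ℝ) ⬝ᵥ Pi.single i 1 = 1 := by
    simp [dotProduct, Pi.single_apply]
  rw [euclNorm, this, Real.sqrt_one]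

lemma abs_lambdaMax_sub_le (A B : Matrix ι ι ℝ) (c : ℝ) (hc : 0 ≤ c)
    (h : ∀ v : ι → ℝ, euclNorm v = 1 → |v ⬝ᵥ ((A - B) *ᵥ v)| ≤ c) :
    |lambdaMax A - lambdaMax B| ≤ c := by
  rcases isEmpty_or_nonempty ι with hempty | hne
  · have he : ∀ X : Matrix ι ι ℝ, lambdaMax X = 0 := by
      intro X
      have hs : {r : ℝ | ∃ v : ι → ℝ, euclNorm v = 1 ∧ r = v ⬝ᵥ (X *ᵥ v)} = ∅ := by
        ext r
        simp only [mem_setOf_eq, mem_empty_iff_false, iff_false, not_exists]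
        rintro v ⟨hv, -⟩
        have h0 : v ⬝ᵥ v = 0 := by simp [dotProduct]
        rw [euclNorm, h0, Real.sqrt_zero] at hv
        norm_num at hv
      rw [lambdaMax, hs, Real.sSup_empty]
    simp [he, hc]
  · have key : ∀ X Y : Matrix ι ι ℝ,
        (∀ v : ι → ℝ, euclNorm v = 1 → |v ⬝ᵥ ((X - Y) *ᵥ v)| ≤ c) →
        lambdaMax X ≤ lambdaMax Y + c := by
      intro X Y hXY
      apply csSup_le (ray_nonempty X)
      rintro r ⟨v, hv, rfl⟩
      have h1 : v ⬝ᵥ (X *ᵥ v) = v ⬝ᵥ (Y *ᵥ v) + v ⬝ᵥ ((X - Y) *ᵥ v) := by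
        rw [Matrix.sub_mulVec, dotProduct_sub]; ring
      rw [h1]
      exact add_le_add (le_csSup (bddAbove_ray Y) ⟨v, hv, rfl⟩)
        ((le_abs_self _).trans (hXY v hv))
    have h2 : ∀ v : ι → ℝ, euclNorm v = 1 → |v ⬝ᵥ ((B - A) *ᵥ v)| ≤ c := by
      intro v hv
      have hba : B - A = -(A - B) := by rw [neg_sub]
      rw [hba, Matrix.neg_mulVec, dotProduct_neg, abs_neg]
      exact h v hv
    rw [abs_sub_le_iff]
    exact ⟨by linarith [key A B h], by linarith [key B A h2]⟩

end LMax

set_option maxHeartbeats 1000000 in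
/-- Proposition 1 of the paper (second inequality): the largest eigenvalue of
`G(s) = [[λM(s) - α⁻¹(C+DK(s))ᵀ(C+DK(s)), 0],[0, (α-μ)I]]` is Lipschitz on `S`
with constant `λ L_M + (2/α) S_C S_D L_K + (4/α) S_K S_D² L_K`. -/
theorem prop1_second_inequality_lipschitz
    (n m p l : ℕ) (E : Type*) [NormedAddCommGroup E] [NormedSpace ℝ E] (S : Set E)
    (lam mu alpha : ℝ) (hlam : 0 < lam) (hmu : 0 < mu) (halpha : mu < alpha)
    (M : E → Matrix (Fin n) (Fin n) ℝ) (hMsymm : ∀ s, (M s).IsSymm)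
    (C : Matrix (Fin p) (Fin n) ℝ) (D : Matrix (Fin p) (Fin m) ℝ)
    (K : E → Matrix (Fin m) (Fin n) ℝ)
    (SC SD SK LM LK : ℝ)
    (hC : specNorm C ≤ SC) (hD : specNorm D ≤ SD)
    (hKb : ∀ s ∈ S, specNorm (K s) ≤ SK)
    (hMl : ∀ s ∈ S, ∀ t ∈ S, specNorm (M s - M t) ≤ LM * ‖s - t‖)
    (hKl : ∀ s ∈ S, ∀ t ∈ S, specNorm (K s - K t) ≤ LK * ‖s - t‖)
    (G : E → Matrix (Fin n ⊕ Fin l) (Fin n ⊕ Fin l) ℝ)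
    (hG : ∀ s, G s = Matrix.fromBlocks
        (lam • M s - alpha⁻¹ • ((C + D * K s)ᵀ * (C + D * K s))) 0 0
        ((alpha - mu) • (1 : Matrix (Fin l) (Fin l) ℝ))) :
    ∀ s ∈ S, ∀ t ∈ S,
      |lambdaMax (G s) - lambdaMax (G t)| ≤
        (lam * LM + (2 / alpha) * SC * SD * LK + (4 / alpha) * SK * SD ^ 2 * LK)
          * ‖s - t‖ := by
  intro s hs t ht
  rcases eq_or_ne s t with rfl | hst
  · simp
  have hnorm : 0 < ‖s - t‖ := by rwa [norm_pos_iff, sub_ne_zero]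
  have hαpos : 0 < alpha := hmu.trans halpha
  have hSC : 0 ≤ SC := (specNorm_nonneg C).trans hC
  have hSD : 0 ≤ SD := (specNorm_nonneg D).trans hD
  have hSK : 0 ≤ SK := (specNorm_nonneg (K s)).trans (hKb s hs)
  have hLM : 0 ≤ LM := by
    by_contra hcon
    push_neg at hcon
    nlinarith [(specNorm_nonneg (M s - M t)).trans (hMl s hs t ht)]
  have hLK : 0 ≤ LK := by
    by_contra hcon
    push_neg at hcon
    nlinarith [(specNorm_nonneg (K s - K t)).trans (hKl s hs t ht)]
  set Ns : Matrix (Fin p) (Fin n) ℝ := C + D * K s with hNs_def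
  set Nt : Matrix (Fin p) (Fin n) ℝ := C + D * K t with hNt_def
  have hNbound : ∀ u ∈ S, specNorm (C + D * K u) ≤ SC + SD * SK := by
    intro u hu
    refine (specNorm_add_le C (D * K u)).trans (add_le_add hC ?_)
    exact (specNorm_mul_le D (K u)).trans
      (mul_le_mul hD (hKb u hu) (specNorm_nonneg _) hSD)
  have hNs_b : specNorm Ns ≤ SC + SD * SK := hNbound s hs
  have hNt_b : specNorm Nt ≤ SC + SD * SK := hNbound t ht
  have hNd : specNorm (Ns - Nt) ≤ SD * (LK * ‖s - t‖) := by
    have heq : Ns - Nt = D * (K s - K t) := by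
      rw [hNs_def, hNt_def, Matrix.mul_sub]; abel
    rw [heq]
    exact (specNorm_mul_le D _).trans
      (mul_le_mul hD (hKl s hs t ht) (specNorm_nonneg _) hSD)
  set X : Matrix (Fin n) (Fin n) ℝ :=
    lam • (M s - M t) - alpha⁻¹ • (Nsᵀ * Ns - Ntᵀ * Nt) with hX_def
  have hGdiff : G s - G t = Matrix.fromBlocks X 0 0 0 := by
    rw [hG s, hG t]
    ext i j
    rcases i with i | i <;> rcases j with j | j <;>
      simp [hX_def, hNs_def, hNt_def, Matrix.sub_apply, Matrix.smul_apply, smul_eq_mul,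
        mul_sub] <;> ring
  set c : ℝ := (lam * LM + (2 / alpha) * SC * SD * LK + (4 / alpha) * SK * SD ^ 2 * LK)
      * ‖s - t‖ with hc_def
  have hc : 0 ≤ c := by
    apply mul_nonneg _ (norm_nonneg _)
    have h1 : 0 ≤ lam * LM := mul_nonneg hlam.le hLM
    have h2 : 0 ≤ (2 / alpha) * SC * SD * LK := by positivity
    have h3 : 0 ≤ (4 / alpha) * SK * SD ^ 2 * LK := by positivity
    linarith
  apply abs_lambdaMax_sub_le _ _ c hc
  intro v hv
  set u : Fin n → ℝ := v ∘ Sum.inl with hu_def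
  set w : Fin l → ℝ := v ∘ Sum.inr with hw_def
  have hvelim : v = Sum.elim u w := (Sum.elim_comp_inl_inr v).symm
  -- norm of u is at most 1
  have hsplit : v ⬝ᵥ v = u ⬝ᵥ u + w ⬝ᵥ w := by
    rw [hvelim, sumElim_dotProduct_sumElim]
  have hu1 : euclNorm u ≤ 1 := by
    have h1 : u ⬝ᵥ u ≤ v ⬝ᵥ v := by
      rw [hsplit]; linarith [dotProduct_self_nonneg' w]
    have := Real.sqrt_le_sqrt h1
    rwa [show Real.sqrt (v ⬝ᵥ v) = euclNorm v from rfl, hv] at this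
  have hu0 : 0 ≤ euclNorm u := euclNorm_nonneg u
  -- reduce the quadratic form to the upper-left block
  have hq : v ⬝ᵥ ((G s - G t) *ᵥ v) = u ⬝ᵥ (X *ᵥ u) := by
    rw [hGdiff]
    conv_lhs => rw [hvelim]
    rw [Matrix.fromBlocks_mulVec]
    simp [Matrix.zero_mulVec, sumElim_dotProduct_sumElim]
  rw [hq]
  -- split X
  have hXsplit : u ⬝ᵥ (X *ᵥ u) =
      lam * (u ⬝ᵥ ((M s - M t) *ᵥ u)) - alpha⁻¹ * (u ⬝ᵥ ((Nsᵀ * Ns - Ntᵀ * Nt) *ᵥ u)) := by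
    rw [hX_def, Matrix.sub_mulVec, Matrix.smul_mulVec, Matrix.smul_mulVec,
      dotProduct_sub, dotProduct_smul, dotProduct_smul, smul_eq_mul, smul_eq_mul]
  -- first term bound
  have hT1 : |u ⬝ᵥ ((M s - M t) *ᵥ u)| ≤ LM * ‖s - t‖ := by
    calc |u ⬝ᵥ ((M s - M t) *ᵥ u)| ≤ specNorm (M s - M t) * euclNorm u ^ 2 :=
          abs_rayleigh_le _ u
      _ ≤ (LM * ‖s - t‖) * 1 := by
          apply mul_le_mul (hMl s hs t ht) _ (by positivity) (by positivity)
          nlinarith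
      _ = LM * ‖s - t‖ := mul_one _
  -- second term: difference of squared norms
  have hsqform : ∀ P : Matrix (Fin p) (Fin n) ℝ,
      u ⬝ᵥ ((Pᵀ * P) *ᵥ u) = euclNorm (P *ᵥ u) ^ 2 := by
    intro P
    rw [← Matrix.mulVec_mulVec, Matrix.dotProduct_mulVec, Matrix.vecMul_transpose,
      euclNorm_sq]
  set a : ℝ := euclNorm (Ns *ᵥ u) with ha_def
  set b : ℝ := euclNorm (Nt *ᵥ u) with hb_def
  have ha0 : 0 ≤ a := euclNorm_nonneg _
  have hb0 : 0 ≤ b := euclNorm_nonneg _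
  have haB : a ≤ SC + SD * SK := by
    calc a ≤ specNorm Ns * euclNorm u := euclNorm_mulVec_le _ _
      _ ≤ (SC + SD * SK) * 1 :=
          mul_le_mul hNs_b hu1 hu0 (by linarith [specNorm_nonneg Ns])
      _ = SC + SD * SK := mul_one _
  have hbB : b ≤ SC + SD * SK := by
    calc b ≤ specNorm Nt * euclNorm u := euclNorm_mulVec_le _ _
      _ ≤ (SC + SD * SK) * 1 :=
          mul_le_mul hNt_b hu1 hu0 (by linarith [specNorm_nonneg Nt])
      _ = SC + SD * SK := mul_one _
  have habd : |a - b| ≤ SD * (LK * ‖s - t‖) := by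
    calc |a - b| ≤ euclNorm (Ns *ᵥ u - Nt *ᵥ u) := abs_euclNorm_sub_le _ _
      _ = euclNorm ((Ns - Nt) *ᵥ u) := by rw [Matrix.sub_mulVec]
      _ ≤ specNorm (Ns - Nt) * euclNorm u := euclNorm_mulVec_le _ _
      _ ≤ (SD * (LK * ‖s - t‖)) * 1 := by
          exact mul_le_mul hNd hu1 hu0 (mul_nonneg hSD (mul_nonneg hLK hnorm.le))
      _ = SD * (LK * ‖s - t‖) := mul_one _
  have hT2eq : u ⬝ᵥ ((Nsᵀ * Ns - Ntᵀ * Nt) *ᵥ u) = a ^ 2 - b ^ 2 := by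
    rw [Matrix.sub_mulVec, dotProduct_sub, hsqform, hsqform]
  have hT2 : |u ⬝ᵥ ((Nsᵀ * Ns - Ntᵀ * Nt) *ᵥ u)| ≤
      2 * (SC + SD * SK) * (SD * (LK * ‖s - t‖)) := by
    rw [hT2eq]
    have hfact : a ^ 2 - b ^ 2 = (a + b) * (a - b) := by ring
    rw [hfact, abs_mul, abs_of_nonneg (by linarith : (0:ℝ) ≤ a + b)]
    have hab : a + b ≤ 2 * (SC + SD * SK) := by linarith
    have h1 : 0 ≤ SD * (LK * ‖s - t‖) := by positivity
    have h2 : 0 ≤ a + b := by linarith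
    nlinarith [abs_nonneg (a - b)]
  -- combine
  rw [hXsplit, hc_def, div_eq_mul_inv, div_eq_mul_inv]
  have hinv : 0 ≤ alpha⁻¹ := by positivity
  obtain ⟨hT1l, hT1r⟩ := abs_le.mp hT1
  obtain ⟨hT2l, hT2r⟩ := abs_le.mp hT2
  have h1 : lam * (u ⬝ᵥ ((M s - M t) *ᵥ u)) ≤ lam * (LM * ‖s - t‖) :=
    mul_le_mul_of_nonneg_left hT1r hlam.le
  have h1' : lam * (-(LM * ‖s - t‖)) ≤ lam * (u ⬝ᵥ ((M s - M t) *ᵥ u)) :=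
    mul_le_mul_of_nonneg_left hT1l hlam.le
  have h2 : alpha⁻¹ * (u ⬝ᵥ ((Nsᵀ * Ns - Ntᵀ * Nt) *ᵥ u)) ≤
      alpha⁻¹ * (2 * (SC + SD * SK) * (SD * (LK * ‖s - t‖))) :=
    mul_le_mul_of_nonneg_left hT2r hinv
  have h2' : alpha⁻¹ * (-(2 * (SC + SD * SK) * (SD * (LK * ‖s - t‖)))) ≤
      alpha⁻¹ * (u ⬝ᵥ ((Nsᵀ * Ns - Ntᵀ * Nt) *ᵥ u)) :=
    mul_le_mul_of_nonneg_left hT2l hinv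
  have hslack : 0 ≤ alpha⁻¹ * (SD ^ 2 * (SK * (LK * ‖s - t‖))) := by positivity
  rw [abs_le]
  constructor <;> nlinarith [h1, h1', h2, h2', hslack]
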